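/- Suppose V is an open neighborhood of 1_H in a topological group H and φ : H → G is a group homomorphism such that φ(V') = φ(V) for every neighborhood V' of 1_H contained in V. Then φ(V) is a subgroup of G. -/

import Mathlib

/-- If `V` is an open neighborhood of `1` in a topological group `H` and
`φ : H →* G` satisfies `φ '' V' = φ '' V` for every neighborhood `V' ⊆ V` of `1`,
then `φ '' V` is a subgroup of `G`. -/
theorem image_isSubgroup_of_stable
    {H : Type*} [Group H] [TopologicalSpace H] [IsTopologicalGroup H]
    {G : Type*} [Group G] (φ : H →* G)
    (V : Set H) (hV : IsOpen V) (h1 : (1 : H) ∈ V)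
    (hstable : ∀ V' ∈ nhds (1 : H), V' ⊆ V → φ '' V' = φ '' V) :
    ∃ S : Subgroup G, (S : Set G) = φ '' V := by
  refine ⟨{ carrier := φ '' V
            one_mem' := ⟨1, h1, map_one φ⟩
            mul_mem' := ?_
            inv_mem' := ?_ }, rfl⟩
  · rintro a b ⟨x, hx, rfl⟩ hb
    have hW : φ '' (V ∩ (x * ·) ⁻¹' V) = φ '' V := by
      refine hstable _ (Filter.inter_mem (hV.mem_nhds h1)
        ((hV.preimage (continuous_mul_left x)).mem_nhds (by simpa using hx)))
        Set.inter_subset_left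
    have hb' : b ∈ φ '' V := hb
    rw [← hW] at hb'
    obtain ⟨w, ⟨hwV, hwx⟩, rfl⟩ := hb'
    exact ⟨x * w, hwx, by simp⟩
  · rintro a ha
    have hW : φ '' (V ∩ V⁻¹) = φ '' V := by
      refine hstable _ (Filter.inter_mem (hV.mem_nhds h1)
        (hV.inv.mem_nhds (by simpa using h1))) Set.inter_subset_left
    have ha' : a ∈ φ '' V := ha
    rw [← hW] at ha'
    obtain ⟨w, ⟨_, hwi⟩, rfl⟩ := ha'
    exact ⟨w⁻¹, hwi, by simp⟩
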